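/- Let W be a doubly-0-astic n×n max-plus matrix. The dilation δ_W is extensive on [a,b]^n (δ_W(x) ≥ x for all x) if and only if W is a Conservative Morphological Weights matrix, i.e., w_ii = 0 for all i and w_ij ≤ 0 for all i,j. -/

import Mathlib

/-- Max-plus product of a matrix with a real vector: `(W ⊗ x)_i = ⨆ j, w_ij + x_j`. -/
noncomputable def deltaE {n : ℕ} (W : Fin n → Fin n → EReal) (x : Fin n → ℝ) (i : Fin n) : EReal :=
  ⨆ j, W i j + (x j : EReal)

/-- Min-plus adjoint candidate: `ε_W(y)_i = ⨅ j, y_j - w_ji`. -/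
noncomputable def epsE {n : ℕ} (W : Fin n → Fin n → EReal) (y : Fin n → ℝ) (i : Fin n) : EReal :=
  ⨅ j, (y j : EReal) - W j i

/-- Row-0-astic: every row supremum equals 0. -/
def RowAstic {n : ℕ} (W : Fin n → Fin n → EReal) : Prop := ∀ i, (⨆ j, W i j) = 0

/-- Column-0-astic: every column supremum equals 0. -/
def ColAstic {n : ℕ} (W : Fin n → Fin n → EReal) : Prop := ∀ j, (⨆ i, W i j) = 0

/-- Doubly-0-astic. -/
def DoublyAstic {n : ℕ} (W : Fin n → Fin n → EReal) : Prop := RowAstic W ∧ ColAstic W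

/-- for doubly-0-astic `W`, the dilation `δ_W` is extensive on `[a,b]^n`
iff `W` is a CMW matrix (`w_ii = 0` and `w_ij ≤ 0`). -/
theorem stmt5 (n : ℕ) (hn : 0 < n) (a b : ℝ) (ha : 0 ≤ a) (hab : a < b)
    (W : Fin n → Fin n → EReal) (hW : DoublyAstic W) :
    (∀ x : Fin n → ℝ, (∀ i, x i ∈ Set.Icc a b) →
        ∀ i, (x i : EReal) ≤ deltaE W x i)
    ↔ ((∀ i, W i i = 0) ∧ (∀ i j, W i j ≤ 0)) := by
  have hle : ∀ i j, W i j ≤ 0 := fun i j => (hW.1 i) ▸ le_iSup (W i) j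
  constructor
  · intro hext
    refine ⟨fun i => ?_, hle⟩
    refine le_antisymm (hle i i) (not_lt.mp fun hlt => ?_)
    set x : Fin n → ℝ := fun j => if j = i then b else a with hx
    have hmem : ∀ j, x j ∈ Set.Icc a b := by
      intro j; by_cases h : j = i <;> simp [hx, h, le_of_lt hab, le_refl]
    have hb : (b : EReal) ≤ deltaE W x i := by
      have := hext x hmem i
      simpa [hx] using this
    have hub : deltaE W x i ≤ max (a : EReal) (W i i + b) := by
      refine iSup_le fun j => ?_
      by_cases h : j = i
      · subst h; simp [hx]
      · have hxj : (x j : EReal) = (a : EReal) := by simp [hx, h]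
        have h1 : W i j + (x j : EReal) ≤ (a : EReal) := by
          calc W i j + (x j : EReal) ≤ 0 + (x j : EReal) :=
                add_le_add_left (hle i j) _
            _ = (a : EReal) := by rw [hxj, zero_add]
        exact le_trans h1 (le_max_left _ _)
    have key : ∀ w : EReal, w < 0 → w + (b : EReal) < (b : EReal) := by
      intro w hw
      induction w using EReal.rec with
      | bot => simp
      | coe r =>
        have : r < 0 := by exact_mod_cast hw
        rw [← EReal.coe_add]; exact_mod_cast by linarith
      | top => exact absurd hw (by simp)
    have hWb : W i i + (b : EReal) < (b : EReal) := key _ hlt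
    have : (b : EReal) < (b : EReal) :=
      lt_of_le_of_lt (hb.trans hub) (max_lt (by exact_mod_cast hab) hWb)
    exact lt_irrefl _ this
  · intro ⟨hdiag, _⟩ x hx i
    calc (x i : EReal) = W i i + x i := by rw [hdiag i, zero_add]
      _ ≤ deltaE W x i := le_iSup (fun j => W i j + (x j : EReal)) i
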